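/- Let C be a (2,M,q) code over Q. Then C is a 2̄-separable code (any two distinct sub-codes of size at most 2 have distinct descendant codes) if and only if for all distinct a₁, a₂ ∈ Q, |A¹_{a₁} ∩ A¹_{a₂}| ≤ 1, where A¹_a = {b ∈ Q : (a,b) ∈ C}. -/
import Mathlib


/-- The descendant code of a sub-code of a code of length 2, viewed as a set of pairs. -/
def desc2 {q : ℕ} (C' : Finset (Fin q × Fin q)) : Set (Fin q × Fin q) :=
  {x | (∃ c ∈ C', c.1 = x.1) ∧ (∃ c ∈ C', c.2 = x.2)}

/-- `C` is a `t`-MIPPC of length 2: for every descendant set produced by some nonempty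
sub-code of size at most `t`, all such parent sets have a common codeword. -/
def isMIPPC2 {q : ℕ} (t : ℕ) (C : Finset (Fin q × Fin q)) : Prop :=
  ∀ S : Set (Fin q × Fin q),
    (∃ C' : Finset (Fin q × Fin q), C' ⊆ C ∧ C'.Nonempty ∧ C'.card ≤ t ∧ desc2 C' = S) →
    ∃ c, ∀ C' : Finset (Fin q × Fin q),
      C' ⊆ C → C'.Nonempty → C'.card ≤ t → desc2 C' = S → c ∈ C'

/-- `A¹_a = {b : (a,b) ∈ C}`. -/
def A1 {q : ℕ} (C : Finset (Fin q × Fin q)) (a : Fin q) : Finset (Fin q) :=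
  (C.filter (fun c => c.1 = a)).image Prod.snd

/-- Condition (I). -/
def CondI {q : ℕ} (C : Finset (Fin q × Fin q)) : Prop :=
  ∀ a₁ a₂ : Fin q, a₁ ≠ a₂ → (A1 C a₁ ∩ A1 C a₂).card ≤ 1

/-- Condition (II). -/
def CondII {q : ℕ} (C : Finset (Fin q × Fin q)) : Prop :=
  ¬ ∃ a₁ a₂ a₃ b₁ b₂ b₃ : Fin q,
      a₁ ≠ a₂ ∧ a₁ ≠ a₃ ∧ a₂ ≠ a₃ ∧ b₁ ≠ b₂ ∧ b₁ ≠ b₃ ∧ b₂ ≠ b₃ ∧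
      b₁ ∈ A1 C a₁ ∧ b₂ ∈ A1 C a₁ ∧ b₂ ∈ A1 C a₂ ∧ b₃ ∈ A1 C a₂ ∧
      b₁ ∈ A1 C a₃ ∧ b₃ ∈ A1 C a₃

/-- `C` is a `2̄`-separable code of length 2. -/
def isSC2 {q : ℕ} (C : Finset (Fin q × Fin q)) : Prop :=
  ∀ C₁ C₂ : Finset (Fin q × Fin q),
    C₁ ⊆ C → C₂ ⊆ C → C₁.Nonempty → C₂.Nonempty → C₁.card ≤ 2 → C₂.card ≤ 2 →
    desc2 C₁ = desc2 C₂ → C₁ = C₂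

/-- A `(2,M,q)` code is `2̄`-separable iff `|A¹_{a₁} ∩ A¹_{a₂}| ≤ 1` for all distinct
`a₁, a₂`. -/
lemma mem_A1 {q : ℕ} (C : Finset (Fin q × Fin q)) (a b : Fin q) :
    b ∈ A1 C a ↔ (a, b) ∈ C := by
  simp only [A1, Finset.mem_image, Finset.mem_filter]
  constructor
  · rintro ⟨⟨x, y⟩, ⟨hc, h1⟩, h2⟩
    simp only at h1 h2
    subst h1; subst h2; exact hc
  · intro h
    exact ⟨(a, b), ⟨h, rfl⟩, rfl⟩

lemma desc2_pair {q : ℕ} (p r : Fin q × Fin q) :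
    desc2 {p, r} = {x | (x.1 = p.1 ∨ x.1 = r.1) ∧ (x.2 = p.2 ∨ x.2 = r.2)} := by
  ext ⟨x, y⟩
  simp only [desc2, Set.mem_setOf_eq, Finset.mem_insert, Finset.mem_singleton]
  constructor
  · rintro ⟨⟨c, hc | hc, h1⟩, ⟨d, hd | hd, h2⟩⟩ <;> subst hc <;> subst hd <;>
      exact ⟨by tauto, by tauto⟩
  · rintro ⟨h1 | h1, h2 | h2⟩ <;>
      exact ⟨⟨_, by tauto, h1.symm⟩, ⟨_, by tauto, h2.symm⟩⟩

lemma key {q : ℕ} {C C₁ C₂ : Finset (Fin q × Fin q)}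
    (hI : CondI C) (h₁ : C₁ ⊆ C) (h₂ : C₂ ⊆ C) (hc₁ : C₁.card ≤ 2)
    (hd : desc2 C₁ = desc2 C₂) : C₁ ⊆ C₂ := by
  rintro ⟨a, b⟩ hx
  by_contra hxn
  have hxd : ((a, b) : Fin q × Fin q) ∈ desc2 C₂ := by
    rw [← hd]; exact ⟨⟨(a, b), hx, rfl⟩, ⟨(a, b), hx, rfl⟩⟩
  obtain ⟨⟨c, hc, hc1⟩, ⟨d, hdC, hd2⟩⟩ := hxd
  have hc2 : c.2 ≠ b := by
    intro h; apply hxn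
    have : c = (a, b) := Prod.ext hc1 h
    rwa [← this]
  have hd1 : d.1 ≠ a := by
    intro h; apply hxn
    have : d = (a, b) := Prod.ext h hd2
    rwa [← this]
  have hdd : d ∈ desc2 C₁ := by
    rw [hd]; exact ⟨⟨d, hdC, rfl⟩, ⟨d, hdC, rfl⟩⟩
  obtain ⟨⟨e, he, he1⟩, -⟩ := hdd
  have hcd : c ∈ desc2 C₁ := by
    rw [hd]; exact ⟨⟨c, hc, rfl⟩, ⟨c, hc, rfl⟩⟩
  obtain ⟨-, ⟨g, hg, hg2⟩⟩ := hcd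
  have hea : e ≠ (a, b) := by intro h; apply hd1; rw [← he1, h]
  have hga : g ≠ (a, b) := by intro h; apply hc2; rw [← hg2, h]
  have heg : e = g := by
    by_contra hne
    have h3 : 2 < C₁.card :=
      Finset.two_lt_card.2 ⟨(a, b), hx, e, he, g, hg, Ne.symm hea, Ne.symm hga, hne⟩
    omega
  have hbad : 1 < (A1 C a ∩ A1 C d.1).card := by
    refine Finset.one_lt_card.2 ⟨b, ?_, c.2, ?_, Ne.symm hc2⟩
    · rw [Finset.mem_inter, mem_A1, mem_A1]
      refine ⟨h₁ hx, ?_⟩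
      have : d = (d.1, b) := Prod.ext rfl hd2
      rw [← this]; exact h₂ hdC
    · rw [Finset.mem_inter, mem_A1, mem_A1]
      constructor
      · have : c = (a, c.2) := Prod.ext hc1 rfl
        rw [← this]; exact h₂ hc
      · have : e = (d.1, c.2) := Prod.ext he1 (heg ▸ hg2)
        rw [← this]; exact h₁ he
  have := hI a d.1 (Ne.symm hd1)
  omega

theorem sc2_iff_condI {q : ℕ} (C : Finset (Fin q × Fin q)) :
    isSC2 C ↔ CondI C := by
  constructor
  · intro hSC a₁ a₂ hne
    by_contra h
    push_neg at h
    obtain ⟨b₁, hb₁, b₂, hb₂, hbne⟩ := Finset.one_lt_card.1 h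
    rw [Finset.mem_inter, mem_A1, mem_A1] at hb₁ hb₂
    have hcard : ∀ x y : Fin q × Fin q, ({x, y} : Finset _).card ≤ 2 := by
      intro x y
      exact le_trans (Finset.card_insert_le _ _) (by simp)
    have hsub₁ : ({(a₁, b₁), (a₂, b₂)} : Finset _) ⊆ C := by
      intro z hz
      simp only [Finset.mem_insert, Finset.mem_singleton] at hz
      rcases hz with h | h <;> subst h <;> tauto
    have hsub₂ : ({(a₁, b₂), (a₂, b₁)} : Finset _) ⊆ C := by
      intro z hz
      simp only [Finset.mem_insert, Finset.mem_singleton] at hz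
      rcases hz with h | h <;> subst h <;> tauto
    have hdesc : desc2 ({(a₁, b₁), (a₂, b₂)} : Finset _) =
        desc2 ({(a₁, b₂), (a₂, b₁)} : Finset _) := by
      rw [desc2_pair, desc2_pair]
      ext ⟨x, y⟩
      simp only [Set.mem_setOf_eq]
      tauto
    have := hSC _ _ hsub₁ hsub₂ (by simp) (by simp) (hcard _ _) (hcard _ _) hdesc
    have hmem : ((a₁, b₁) : Fin q × Fin q) ∈ ({(a₁, b₂), (a₂, b₁)} : Finset _) := by
      rw [← this]; simp
    simp only [Finset.mem_insert, Finset.mem_singleton, Prod.mk.injEq] at hmem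
    rcases hmem with ⟨_, h⟩ | ⟨h, _⟩
    · exact hbne h
    · exact hne h
  · intro hI C₁ C₂ h₁ h₂ _ _ hc₁ hc₂ hd
    exact Finset.Subset.antisymm (key hI h₁ h₂ hc₁ hd) (key hI h₂ h₁ hc₂ hd.symm)
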